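/- Let q be a prime power and let n = q² + q + 1. Then the complete graph K_n admits a connected and complete k-edge-coloring with k = ⌈q/2⌉ · n colors; that is, ⌈q/2⌉ · (q² + q + 1) ≤ ψ'_c(K_n). -/

import Mathlib

open SimpleGraph

/-- The subgraph of `G` formed by the edges of color `i`. -/
def colorClassSubgraph {V : Type*} {k : ℕ} (G : SimpleGraph V) (c : Sym2 V → Fin k)
    (i : Fin k) : G.Subgraph where
  verts := {v | ∃ w, G.Adj v w ∧ c s(v, w) = i}
  Adj v w := G.Adj v w ∧ c s(v, w) = i
  adj_sub h := h.1
  edge_vert h := ⟨_, h⟩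
  symm := ⟨fun v w h => ⟨h.1.symm, by rw [Sym2.eq_swap]; exact h.2⟩⟩

/-- `c` is a complete edge-coloring of `G` with `k` colors: every color is used on some
edge, and every two distinct colors appear on a pair of edges sharing a vertex. -/
def IsCompleteEdgeColoring {V : Type*} {k : ℕ} (G : SimpleGraph V)
    (c : Sym2 V → Fin k) : Prop :=
  (∀ i : Fin k, ∃ e ∈ G.edgeSet, c e = i) ∧
  ∀ i j : Fin k, i ≠ j →
    ∃ u v w : V, G.Adj u v ∧ G.Adj u w ∧ c s(u, v) = i ∧ c s(u, w) = j

/-- `c` is a connected edge-coloring: each color class induces a connected subgraph. -/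
def IsConnectedEdgeColoring {V : Type*} {k : ℕ} (G : SimpleGraph V)
    (c : Sym2 V → Fin k) : Prop :=
  ∀ i : Fin k, (colorClassSubgraph G c i).Connected


/-- The connected-pseudoachromatic index of the complete graph `K_n`. -/
noncomputable def connectedPseudoachromaticIndex (n : ℕ) : ℕ :=
  sSup {k : ℕ | ∃ c : Sym2 (Fin n) → Fin k,
    IsCompleteEdgeColoring (⊤ : SimpleGraph (Fin n)) c ∧
      IsConnectedEdgeColoring (⊤ : SimpleGraph (Fin n)) c}


section AuxZig

/-- zigzag enumeration of `ZMod m`: 0, 1, -1, 2, -2, ... -/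
def zig (m t : ℕ) : ZMod m :=
  if t % 2 = 0 then -((t / 2 : ℕ) : ZMod m) else ((t + 1) / 2 : ℕ)

lemma zig_even (m a : ℕ) : zig m (2 * a) = -((a : ℕ) : ZMod m) := by
  simp [zig, Nat.mul_mod_right, Nat.mul_div_cancel_left _ (by norm_num : 0 < 2)]

lemma zig_odd (m a : ℕ) : zig m (2 * a + 1) = (((a + 1 : ℕ)) : ZMod m) := by
  have h1 : (2 * a + 1) % 2 = 1 := by omega
  have h2 : (2 * a + 1 + 1) / 2 = a + 1 := by omega
  simp [zig, h1, h2]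

lemma natCast_zmod_inj {m a b : ℕ} (ha : a < m) (hb : b < m)
    (h : (a : ZMod m) = (b : ZMod m)) : a = b := by
  haveI : NeZero m := ⟨by omega⟩
  have := congrArg ZMod.val h
  rwa [ZMod.val_cast_of_lt ha, ZMod.val_cast_of_lt hb] at this

lemma natCast_zmod_add_eq_zero {m a b : ℕ} (hm : 0 < m)
    (h : (a : ZMod m) + (b : ZMod m) = 0) : m ∣ a + b := by
  haveI : NeZero m := ⟨by omega⟩
  rwa [← Nat.cast_add, ZMod.natCast_eq_zero_iff] at h

lemma eq_of_dvd_bounded {m x : ℕ} (h : m ∣ x) (h1 : 0 < x) (h2 : x < 2 * m) : x = m := by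
  obtain ⟨c, rfl⟩ := h
  rcases c with _ | _ | c
  · omega
  · omega
  · exfalso
    have h3 : m * 2 ≤ m * (c + 1 + 1) := Nat.mul_le_mul_left m (by omega)
    omega

lemma zig_inj {m : ℕ} {t s : ℕ} (ht : t < m) (hs : s < m) (h : zig m t = zig m s) : t = s := by
  have hm : 0 < m := by omega
  rcases Nat.even_or_odd t with ht2 | ht2 <;> rcases Nat.even_or_odd s with hs2 | hs2
  · obtain ⟨a, rfl⟩ : ∃ a, t = 2 * a := by obtain ⟨a, h2⟩ := ht2; exact ⟨a, by omega⟩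
    obtain ⟨b, rfl⟩ : ∃ b, s = 2 * b := by obtain ⟨b, h2⟩ := hs2; exact ⟨b, by omega⟩
    rw [zig_even, zig_even, neg_inj] at h
    have := natCast_zmod_inj (by omega) (by omega) h
    omega
  · obtain ⟨a, rfl⟩ : ∃ a, t = 2 * a := by obtain ⟨a, h2⟩ := ht2; exact ⟨a, by omega⟩
    obtain ⟨b, rfl⟩ : ∃ b, s = 2 * b + 1 := by obtain ⟨b, h2⟩ := hs2; exact ⟨b, by omega⟩
    rw [zig_even, zig_odd] at h
    have h2 : ((a : ZMod m)) + ((b + 1 : ℕ) : ZMod m) = 0 := by rw [← h]; ring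
    have h3 := Nat.le_of_dvd (by omega) (natCast_zmod_add_eq_zero hm h2)
    omega
  · obtain ⟨a, rfl⟩ : ∃ a, t = 2 * a + 1 := by obtain ⟨a, h2⟩ := ht2; exact ⟨a, by omega⟩
    obtain ⟨b, rfl⟩ : ∃ b, s = 2 * b := by obtain ⟨b, h2⟩ := hs2; exact ⟨b, by omega⟩
    rw [zig_odd, zig_even] at h
    have h2 : ((b : ZMod m)) + ((a + 1 : ℕ) : ZMod m) = 0 := by rw [h]; ring
    have h3 := Nat.le_of_dvd (by omega) (natCast_zmod_add_eq_zero hm h2)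
    omega
  · obtain ⟨a, rfl⟩ : ∃ a, t = 2 * a + 1 := by obtain ⟨a, h2⟩ := ht2; exact ⟨a, by omega⟩
    obtain ⟨b, rfl⟩ : ∃ b, s = 2 * b + 1 := by obtain ⟨b, h2⟩ := hs2; exact ⟨b, by omega⟩
    rw [zig_odd, zig_odd] at h
    have := natCast_zmod_inj (by omega) (by omega) h
    omega

lemma zig_surj {m : ℕ} (hm : 0 < m) (x : ZMod m) : ∃ t, t < m ∧ zig m t = x := by
  haveI : NeZero m := ⟨by omega⟩
  have hbij : Function.Bijective (fun t : Fin m => zig m t.val) := by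
    rw [Fintype.bijective_iff_injective_and_card]
    refine ⟨fun t s h => Fin.ext (zig_inj t.isLt s.isLt h), by simp [ZMod.card]⟩
  obtain ⟨t, ht⟩ := hbij.2 x
  exact ⟨t.val, t.isLt, ht⟩

lemma zig_add_zig (m t : ℕ) : zig m t + zig m (t + 1) = (((t + 1) % 2 : ℕ) : ZMod m) := by
  rcases Nat.even_or_odd t with ht2 | ht2
  · obtain ⟨a, rfl⟩ : ∃ a, t = 2 * a := by obtain ⟨a, h2⟩ := ht2; exact ⟨a, by omega⟩
    rw [zig_even, zig_odd, show (2 * a + 1) % 2 = 1 by omega]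
    push_cast; ring
  · obtain ⟨a, rfl⟩ : ∃ a, t = 2 * a + 1 := by obtain ⟨a, h2⟩ := ht2; exact ⟨a, by omega⟩
    rw [show 2 * a + 1 + 1 = 2 * (a + 1) by ring, zig_odd, zig_even,
      show (2 * (a + 1)) % 2 = 0 by omega]
    push_cast; ring

lemma zig_diff (m t : ℕ) :
    zig m (t + 1) - zig m t = ((t + 1 : ℕ) : ZMod m) ∨
    zig m (t + 1) - zig m t = -((t + 1 : ℕ) : ZMod m) := by
  rcases Nat.even_or_odd t with ht2 | ht2
  · obtain ⟨a, rfl⟩ : ∃ a, t = 2 * a := by obtain ⟨a, h2⟩ := ht2; exact ⟨a, by omega⟩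
    left
    rw [zig_even, zig_odd]
    push_cast; ring
  · obtain ⟨a, rfl⟩ : ∃ a, t = 2 * a + 1 := by obtain ⟨a, h2⟩ := ht2; exact ⟨a, by omega⟩
    right
    rw [show 2 * a + 1 + 1 = 2 * (a + 1) by ring, zig_odd, zig_even]
    push_cast; ring

/-- Core disjointness: the zigzag paths starting at `j, j' < r` are pairwise edge-disjoint. -/
lemma zig_edge_disjoint {m r j j' t s : ℕ} (hm : 3 ≤ m) (hrm : m = 2 * r ∨ m = 2 * r + 1)
    (hj : j < r) (hj' : j' < r) (ht : t + 2 ≤ m) (hs : s + 2 ≤ m)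
    (h : s((j : ZMod m) + zig m t, (j : ZMod m) + zig m (t + 1)) =
      s((j' : ZMod m) + zig m s, (j' : ZMod m) + zig m (s + 1))) : j = j' := by
  have hm0 : 0 < m := by omega
  rw [Sym2.eq_iff] at h
  have hsum : ((2 * j + (t + 1) % 2 : ℕ) : ZMod m) = ((2 * j' + (s + 1) % 2 : ℕ) : ZMod m) := by
    have h1 : (j : ZMod m) + (j : ZMod m) + (zig m t + zig m (t + 1)) =
        (j' : ZMod m) + (j' : ZMod m) + (zig m s + zig m (s + 1)) := by
      rcases h with ⟨h1, h2⟩ | ⟨h1, h2⟩ <;> linear_combination h1 + h2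
    rw [zig_add_zig, zig_add_zig] at h1
    push_cast
    push_cast at h1
    linear_combination h1
  have hdiff : ((t + 1 : ℕ) : ZMod m) = ((s + 1 : ℕ) : ZMod m) ∨
      ((t + 1 : ℕ) : ZMod m) + ((s + 1 : ℕ) : ZMod m) = 0 := by
    have h1 : zig m (t + 1) - zig m t = zig m (s + 1) - zig m s ∨
        zig m (t + 1) - zig m t = -(zig m (s + 1) - zig m s) := by
      rcases h with ⟨h1, h2⟩ | ⟨h1, h2⟩
      · left; linear_combination h2 - h1
      · right; linear_combination h2 - h1
    rcases zig_diff m t with e1 | e1 <;> rcases zig_diff m s with e2 | e2 <;>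
      rw [e1, e2] at h1 <;> rcases h1 with h1 | h1 <;>
      first
        | (left; linear_combination h1)
        | (left; linear_combination -h1)
        | (right; linear_combination h1)
        | (right; linear_combination -h1)
  rcases hdiff with hA | hB
  · have hts : t = s := by
      have := natCast_zmod_inj (by omega) (by omega) hA
      omega
    subst hts
    have := natCast_zmod_inj (m := m) (by omega) (by omega) hsum
    omega
  · have hdvd := natCast_zmod_add_eq_zero hm0 hB
    have hts : (t + 1) + (s + 1) = m := eq_of_dvd_bounded hdvd (by omega) (by omega)
    have := natCast_zmod_inj (m := m) (by omega) (by omega) hsum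
    omega

end AuxZig

section AuxProj
open LinearAlgebra.Projectivization Projectivization
open LinearAlgebra.Projectivization Projectivization

lemma aux_card_proj (K : Type) [Field K] [Fintype K] [DecidableEq K] :
    Nat.card (ℙ K (Fin 3 → K)) * Fintype.card Kˣ + 1 = Fintype.card K ^ 3 := by
  classical
  haveI : Finite (ℙ K (Fin 3 → K)) := Quotient.finite _
  haveI : Fintype (ℙ K (Fin 3 → K)) := Fintype.ofFinite _
  rw [Nat.card_eq_fintype_card]
  have hfull : Fintype.card {v : Fin 3 → K // v ≠ 0} + 1 = Fintype.card K ^ 3 := by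
    have h := Fintype.card_congr (Equiv.sumCompl (fun v : Fin 3 → K => v = 0))
    rw [Fintype.card_sum, Fintype.card_subtype_eq] at h
    have h2 : Fintype.card (Fin 3 → K) = Fintype.card K ^ 3 := by
      rw [Fintype.card_fun, Fintype.card_fin]
    simp only [ne_eq]
    omega
  have hfib : ∀ x : ℙ K (Fin 3 → K),
      Fintype.card {v : {v : Fin 3 → K // v ≠ 0} // mk' K v = x} = Fintype.card Kˣ := by
    intro x
    have hb : Function.Bijective (fun a : Kˣ =>
        (⟨⟨(a : K) • x.rep, smul_ne_zero (Units.ne_zero a) x.rep_nonzero⟩, by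
          rw [mk'_eq_mk]
          have h1 : Projectivization.mk K ((a : K) • x.rep)
              (smul_ne_zero (Units.ne_zero a) x.rep_nonzero) =
              Projectivization.mk K x.rep x.rep_nonzero := by
            rw [mk_eq_mk_iff']
            exact ⟨a, rfl⟩
          rw [h1, mk_rep]⟩ :
          {v : {v : Fin 3 → K // v ≠ 0} // mk' K v = x})) := by
      constructor
      · intro a b hab
        have h1 : (a : K) • x.rep = (b : K) • x.rep := by
          have := congrArg (fun y => (y.1 : Fin 3 → K)) hab
          simpa using this
        exact Units.ext (smul_left_injective K x.rep_nonzero h1)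
      · rintro ⟨⟨v, hv⟩, hx⟩
        rw [mk'_eq_mk] at hx
        have h2 : Projectivization.mk K v hv = Projectivization.mk K x.rep x.rep_nonzero := by
          rw [mk_rep]; exact hx
        rw [mk_eq_mk_iff] at h2
        obtain ⟨a, ha⟩ := h2
        exact ⟨a, by
          apply Subtype.ext; apply Subtype.ext
          simpa [Units.smul_def] using ha⟩
    exact (Fintype.card_of_bijective hb).symm
  rw [← hfull]
  congr 1
  rw [Fintype.card_congr (Equiv.sigmaFiberEquiv (fun v : {v : Fin 3 → K // v ≠ 0} => mk' K v)).symm,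
    Fintype.card_sigma]
  have : ∀ x : ℙ K (Fin 3 → K),
      Fintype.card {v : {v : Fin 3 → K // v ≠ 0} // mk' K v = x} = Fintype.card Kˣ := hfib
  rw [Finset.sum_congr rfl (fun x _ => this x), Finset.sum_const, Finset.card_univ, smul_eq_mul,
    mul_comm]

end AuxProj

/-- vertex `t` of the zigzag path starting at `j` on line `l`. -/
def pathPt {P : Type*} (m : ℕ) (pos : P → ZMod m → P) (l : P) (j t : ℕ) : P :=
  pos l ((j : ZMod m) + zig m t)

def edgeOf {P : Type*} (m r : ℕ) (pos : P → ZMod m → P) (l : P) (j : Fin r)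
    (e : Sym2 P) : Prop :=
  ∃ t, t + 2 ≤ m ∧ e = s(pathPt m pos l j t, pathPt m pos l j (t + 1))

open scoped Classical in
noncomputable def classOf {P : Type*} (m r : ℕ) (hr : 0 < r) (pos : P → ZMod m → P)
    (l : P) (e : Sym2 P) : Fin r :=
  if h : ∃ j : Fin r, edgeOf m r pos l j e then h.choose else ⟨0, hr⟩

lemma classOf_eq {P : Type*} {m r : ℕ} (hm : 3 ≤ m) (hrm : m = 2 * r ∨ m = 2 * r + 1)
    (hr : 0 < r) {pos : P → ZMod m → P} (hinj : ∀ l, Function.Injective (pos l))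
    {l : P} {j : Fin r} {e : Sym2 P} (h : edgeOf m r pos l j e) :
    classOf m r hr pos l e = j := by
  have hex : ∃ j : Fin r, edgeOf m r pos l j e := ⟨j, h⟩
  classical
  rw [classOf]
  rw [dif_pos hex]
  obtain ⟨t, ht, he⟩ := hex.choose_spec
  obtain ⟨t', ht', he'⟩ := h
  rw [he] at he'
  have h2 : s(((hex.choose : ℕ) : ZMod m) + zig m t, ((hex.choose : ℕ) : ZMod m) + zig m (t + 1))
      = s(((j : ℕ) : ZMod m) + zig m t', ((j : ℕ) : ZMod m) + zig m (t' + 1)) := by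
    have h3 : Sym2.map (pos l) s(((hex.choose : ℕ) : ZMod m) + zig m t,
        ((hex.choose : ℕ) : ZMod m) + zig m (t + 1)) =
        Sym2.map (pos l) s(((j : ℕ) : ZMod m) + zig m t', ((j : ℕ) : ZMod m) + zig m (t' + 1)) := by
      rw [Sym2.map_pair_eq, Sym2.map_pair_eq]
      exact he'
    exact Sym2.map.injective (hinj l) h3
  exact Fin.ext (zig_edge_disjoint hm hrm hex.choose.isLt j.isLt ht ht' h2)

noncomputable def mycolor {P : Type*} [DecidableEq P] (m r k : ℕ) (hr : 0 < r) (hk : 0 < k)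
    (pos : P → ZMod m → P) (line : P → P → P) (hsym : ∀ u v, line u v = line v u)
    (eK : P × Fin r → Fin k) : Sym2 P → Fin k :=
  Sym2.lift ⟨fun u v => if u = v then ⟨0, hk⟩
    else eK (line u v, classOf m r hr pos (line u v) s(u, v)), by
      intro u v
      dsimp only
      by_cases h : u = v
      · rw [if_pos h, if_pos h.symm]
      · rw [if_neg h, if_neg (Ne.symm h), hsym u v, Sym2.eq_swap]⟩

lemma mycolor_pair {P : Type*} [DecidableEq P] (m r k : ℕ) (hr : 0 < r) (hk : 0 < k)
    (pos : P → ZMod m → P) (line : P → P → P) (hsym : ∀ u v, line u v = line v u)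
    (eK : P × Fin r → Fin k) {u v : P} (h : u ≠ v) :
    mycolor m r k hr hk pos line hsym eK s(u, v) =
      eK (line u v, classOf m r hr pos (line u v) s(u, v)) := by
  rw [mycolor, Sym2.lift_mk]
  exact if_neg h

lemma subgraph_connected_of_path {V : Type*} {G : SimpleGraph V} {H : G.Subgraph}
    (m : ℕ) (hm : 2 ≤ m) (f : ℕ → V)
    (hadj : ∀ t, t + 2 ≤ m → H.Adj (f t) (f (t + 1)))
    (hcover : ∀ v ∈ H.verts, ∃ t, t + 1 ≤ m ∧ f t = v) : H.Connected := by
  have hmem : ∀ t, t + 1 ≤ m → f t ∈ H.verts := by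
    intro t ht
    rcases Nat.lt_or_ge (t + 2) (m + 1) with h | h
    · exact (hadj t (by omega)).fst_mem
    · have h2 := hadj (t - 1) (by omega)
      rw [show t - 1 + 1 = t by omega] at h2
      exact h2.snd_mem
  have hreach : ∀ t (ht : t + 1 ≤ m),
      H.coe.Reachable ⟨f 0, hmem 0 (by omega)⟩ ⟨f t, hmem t ht⟩ := by
    intro t
    induction t with
    | zero => intro _; exact Reachable.refl _
    | succ t ih =>
      intro ht
      refine (ih (by omega)).trans ?_
      have h2 : H.coe.Adj ⟨f t, hmem t (by omega)⟩ ⟨f (t + 1), hmem (t + 1) ht⟩ := by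
        rw [Subgraph.coe_adj]
        exact hadj t (by omega)
      exact h2.reachable
  rw [Subgraph.connected_iff]
  constructor
  · constructor
    rintro ⟨u, hu⟩ ⟨v, hv⟩
    obtain ⟨tu, htu, hfu⟩ := hcover u hu
    obtain ⟨tv, htv, hfv⟩ := hcover v hv
    have h1 : (⟨u, hu⟩ : H.verts) = ⟨f tu, hmem tu htu⟩ := by simp [hfu]
    have h2 : (⟨v, hv⟩ : H.verts) = ⟨f tv, hmem tv htv⟩ := by simp [hfv]
    rw [h1, h2]
    exact (hreach tu htu).symm.trans (hreach tv htv)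
  · exact ⟨f 0, hmem 0 (by omega)⟩

lemma main_construction (P : Type*) [Fintype P] [Membership P P]
    [Configuration.ProjectivePlane P P]
    (q n : ℕ) (hq : 2 ≤ q) (horder : Configuration.ProjectivePlane.order P P = q)
    (hcard : Fintype.card P = n) :
    ∃ c : Sym2 (Fin n) → Fin ((q + 1) / 2 * n),
      IsCompleteEdgeColoring (⊤ : SimpleGraph (Fin n)) c ∧
        IsConnectedEdgeColoring (⊤ : SimpleGraph (Fin n)) c := by
  classical
  set m := q + 1 with hm_def
  set r := (q + 1) / 2 with hr_def
  have hm3 : 3 ≤ m := by omega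
  have hrm : m = 2 * r ∨ m = 2 * r + 1 := by omega
  have hr0 : 0 < r := by omega
  have hn : n = q ^ 2 + q + 1 := by
    rw [← hcard, Configuration.ProjectivePlane.card_points P P, horder]
  have hn0 : 0 < n := by rw [hn]; positivity
  have hk0 : 0 < r * n := Nat.mul_pos hr0 hn0
  haveI : NeZero m := ⟨by omega⟩
  have hlinecard : ∀ l : P, Nat.card {p : P // p ∈ l} = m := by
    intro l
    have h := Configuration.ProjectivePlane.pointCount_eq P l
    rw [horder] at h
    rw [hm_def, ← h]
    rfl
  obtain ⟨φ⟩ : Nonempty (∀ l : P, ZMod m ≃ {p : P // p ∈ l}) := by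
    refine ⟨fun l => ?_⟩
    haveI : Fintype {p : P // p ∈ l} := Fintype.ofFinite _
    apply Fintype.equivOfCardEq
    rw [← Nat.card_eq_fintype_card, ← Nat.card_eq_fintype_card, Nat.card_zmod, hlinecard]
  set pos : P → ZMod m → P := fun l x => (φ l x : P) with hpos_def
  have hposmem : ∀ (l : P) (x : ZMod m), pos l x ∈ l := fun l x => (φ l x).2
  have hposinj : ∀ l, Function.Injective (pos l) :=
    fun l x y h => (φ l).injective (Subtype.ext h)
  have hpossurj : ∀ (l p : P), p ∈ l → ∃ x, pos l x = p := by
    intro l p hp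
    exact ⟨(φ l).symm ⟨p, hp⟩, by simp [hpos_def]⟩
  obtain ⟨line, hlmem1, hlmem2, hluniq⟩ :
      ∃ line : P → P → P, (∀ u v : P, u ≠ v → u ∈ line u v) ∧
        (∀ u v : P, u ≠ v → v ∈ line u v) ∧
        (∀ u v l : P, u ≠ v → u ∈ l → v ∈ l → l = line u v) := by
    refine ⟨fun u v => if h : u ≠ v then Configuration.HasLines.mkLine h else u, ?_, ?_, ?_⟩
    · intro u v h; dsimp only; rw [dif_pos h]; exact (Configuration.HasLines.mkLine_ax h).1
    · intro u v h; dsimp only; rw [dif_pos h]; exact (Configuration.HasLines.mkLine_ax h).2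
    · intro u v l h hu hv
      dsimp only
      rw [dif_pos h]
      exact (Configuration.Nondegenerate.eq_or_eq hu hv (Configuration.HasLines.mkLine_ax h).1
        (Configuration.HasLines.mkLine_ax h).2).resolve_left h
  have hlsymm : ∀ u v, line u v = line v u := by
    intro u v
    by_cases h : u = v
    · rw [h]
    · exact hluniq v u (line u v) (Ne.symm h) (hlmem2 u v h) (hlmem1 u v h)
  obtain ⟨eK⟩ : Nonempty (P × Fin r ≃ Fin (r * n)) := by
    refine ⟨Fintype.equivFinOfCardEq ?_⟩
    rw [Fintype.card_prod, hcard, Fintype.card_fin, mul_comm]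
  obtain ⟨eP⟩ : Nonempty (Fin n ≃ P) := ⟨(Fintype.equivFinOfCardEq hcard).symm⟩
  set c : Sym2 (Fin n) → Fin (r * n) :=
    fun e => mycolor m r (r * n) hr0 hk0 pos line hlsymm eK (e.map eP) with hc_def
  have hcpair : ∀ a b : Fin n, a ≠ b → c s(a, b) =
      eK (line (eP a) (eP b), classOf m r hr0 pos (line (eP a) (eP b)) s(eP a, eP b)) := by
    intro a b hab
    rw [hc_def]
    dsimp only
    rw [Sym2.map_pair_eq]
    exact mycolor_pair m r (r * n) hr0 hk0 pos line hlsymm eK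
      (fun h => hab (eP.injective h))
  have hAdjIff : ∀ (l : P) (j : Fin r) (a b : Fin n),
      (colorClassSubgraph (⊤ : SimpleGraph (Fin n)) c (eK (l, j))).Adj a b ↔
        (a ≠ b ∧ line (eP a) (eP b) = l ∧ classOf m r hr0 pos l s(eP a, eP b) = j) := by
    intro l j a b
    constructor
    · rintro ⟨hadj, hcc⟩
      have hab : a ≠ b := hadj.ne
      rw [hcpair a b hab] at hcc
      have h2 := eK.injective hcc
      have h3 : line (eP a) (eP b) = l := congrArg Prod.fst h2
      have h4 := congrArg Prod.snd h2
      dsimp at h4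
      rw [h3] at h4
      exact ⟨hab, h3, h4⟩
    · rintro ⟨hab, h1, h2⟩
      refine ⟨by simpa using hab, ?_⟩
      rw [hcpair a b hab, h1, h2]
  have hedge : ∀ (l : P) (j : Fin r) (t : ℕ), t + 2 ≤ m →
      (colorClassSubgraph (⊤ : SimpleGraph (Fin n)) c (eK (l, j))).Adj
        (eP.symm (pathPt m pos l j t)) (eP.symm (pathPt m pos l j (t + 1))) := by
    intro l j t ht
    have hne : pathPt m pos l j t ≠ pathPt m pos l j (t + 1) := by
      intro h
      have h2 := hposinj l h
      have h3 : zig m t = zig m (t + 1) := by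
        have := add_left_cancel h2
        exact this
      have := zig_inj (show t < m by omega) (show t + 1 < m by omega) h3
      omega
    have hab : eP.symm (pathPt m pos l j t) ≠ eP.symm (pathPt m pos l j (t + 1)) :=
      fun h => hne (eP.symm.injective h)
    rw [hAdjIff]
    refine ⟨hab, ?_, ?_⟩
    · rw [Equiv.apply_symm_apply, Equiv.apply_symm_apply]
      exact (hluniq _ _ l hne (hposmem l _) (hposmem l _)).symm
    · rw [Equiv.apply_symm_apply, Equiv.apply_symm_apply]
      exact classOf_eq hm3 hrm hr0 hposinj ⟨t, ht, rfl⟩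
  have hcover : ∀ (l : P) (j : Fin r) (p : P), p ∈ l →
      ∃ t, t + 1 ≤ m ∧ pathPt m pos l j t = p := by
    intro l j p hp
    obtain ⟨x, hx⟩ := hpossurj l p hp
    obtain ⟨t, ht, hzig⟩ := zig_surj (show 0 < m by omega) (x - (j : ZMod m))
    refine ⟨t, by omega, ?_⟩
    rw [pathPt, hzig, add_sub_cancel, hx]
  -- incident edge at every point of the line
  have hfind : ∀ (l : P) (j : Fin r) (p : P), p ∈ l →
      ∃ w, (colorClassSubgraph (⊤ : SimpleGraph (Fin n)) c (eK (l, j))).Adj (eP.symm p) w := by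
    intro l j p hp
    obtain ⟨t, ht1, hpt⟩ := hcover l j p hp
    rcases Nat.lt_or_ge (t + 2) (m + 1) with h | h
    · have h2 := hedge l j t (by omega)
      rw [hpt] at h2
      exact ⟨_, h2⟩
    · have h2 := (hedge l j (t - 1) (by omega)).symm
      rw [show t - 1 + 1 = t by omega, hpt] at h2
      exact ⟨_, h2⟩
  refine ⟨c, ⟨?_, ?_⟩, ?_⟩
  · -- surjectivity
    intro i
    obtain ⟨⟨l, j⟩, rfl⟩ : ∃ p, eK p = i := ⟨eK.symm i, by simp⟩
    have h2 := hedge l j 0 (by omega)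
    exact ⟨s(eP.symm (pathPt m pos l j 0), eP.symm (pathPt m pos l j 1)),
      ((⊤ : SimpleGraph (Fin n)).mem_edgeSet).mpr h2.1, h2.2⟩
  · -- pairwise
    intro i i' hii'
    obtain ⟨⟨l, j⟩, rfl⟩ : ∃ p, eK p = i := ⟨eK.symm i, by simp⟩
    obtain ⟨⟨l', j'⟩, rfl⟩ : ∃ p, eK p = i' := ⟨eK.symm i', by simp⟩
    have hp : ∃ p : P, p ∈ l ∧ p ∈ l' := by
      by_cases hll : l = l'
      · exact ⟨pos l 0, hposmem l 0, hll ▸ hposmem l 0⟩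
      · exact ⟨Configuration.HasPoints.mkPoint hll,
          (Configuration.HasPoints.mkPoint_ax hll).1,
          (Configuration.HasPoints.mkPoint_ax hll).2⟩
    obtain ⟨p, hp1, hp2⟩ := hp
    obtain ⟨w, hw⟩ := hfind l j p hp1
    obtain ⟨w', hw'⟩ := hfind l' j' p hp2
    exact ⟨eP.symm p, w, w', hw.1, hw'.1, hw.2, hw'.2⟩
  · -- connectedness
    intro i
    obtain ⟨⟨l, j⟩, rfl⟩ : ∃ p, eK p = i := ⟨eK.symm i, by simp⟩
    apply subgraph_connected_of_path m (by omega) (fun t => eP.symm (pathPt m pos l j t))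
    · exact hedge l j
    · intro v hv
      obtain ⟨w, hvw⟩ := hv
      have hAdj : (colorClassSubgraph (⊤ : SimpleGraph (Fin n)) c (eK (l, j))).Adj v w := hvw
      rw [hAdjIff] at hAdj
      have hmemv : eP v ∈ l := hAdj.2.1 ▸ hlmem1 (eP v) (eP w) (fun h => hAdj.1 (eP.injective h))
      obtain ⟨t, ht, hpt⟩ := hcover l j (eP v) hmemv
      exact ⟨t, ht, by rw [hpt, Equiv.symm_apply_apply]⟩

theorem connected_pseudoachromatic_index_lower_bound_prime_power
    (q : ℕ) (hq : IsPrimePow q) (n : ℕ) (hn : n = q ^ 2 + q + 1) :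
    (∃ c : Sym2 (Fin n) → Fin ((q + 1) / 2 * n),
      IsCompleteEdgeColoring (⊤ : SimpleGraph (Fin n)) c ∧
        IsConnectedEdgeColoring (⊤ : SimpleGraph (Fin n)) c) ∧
      (q + 1) / 2 * n ≤ connectedPseudoachromaticIndex n := by
  classical
  obtain ⟨F⟩ : Nonempty (Field (Fin q)) := by
    rw [Fintype.nonempty_field_iff, Fintype.card_fin]; exact hq
  letI : Field (Fin q) := F
  have hq2 : 2 ≤ q := hq.two_le
  set P := Projectivization (Fin q) (Fin 3 → Fin q) with hP_def
  haveI : Finite P := Quotient.finite _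
  haveI : Fintype P := Fintype.ofFinite _
  have haux := aux_card_proj (Fin q)
  have hu : Fintype.card (Fin q)ˣ = q - 1 := by rw [Fintype.card_units, Fintype.card_fin]
  rw [Fintype.card_fin, hu, Nat.card_eq_fintype_card] at haux
  have hkey : (q ^ 2 + q + 1) * (q - 1) + 1 = q ^ 3 := by
    obtain ⟨d, hd⟩ := Nat.exists_eq_add_of_le hq2
    subst hd
    rw [show 2 + d - 1 = 1 + d by omega]
    ring
  have hcardP : Fintype.card P = n := by
    rw [hn]
    have h2 := haux.trans hkey.symm
    exact Nat.eq_of_mul_eq_mul_right (show 0 < q - 1 by omega) (Nat.add_right_cancel h2)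
  have horder : Configuration.ProjectivePlane.order P P = q := by
    have h1 := Configuration.ProjectivePlane.card_points P P
    rw [hcardP, hn] at h1
    rcases lt_trichotomy (Configuration.ProjectivePlane.order P P) q with h | h | h
    · exfalso
      have := Nat.pow_lt_pow_left h (two_ne_zero)
      omega
    · exact h
    · exfalso
      have := Nat.pow_lt_pow_left h (two_ne_zero)
      omega
  have hmain := main_construction P q n hq2 horder hcardP
  refine ⟨hmain, ?_⟩
  apply le_csSup
  · refine ⟨Fintype.card (Sym2 (Fin n)), ?_⟩
    rintro k ⟨c, hcomp, -⟩
    have hinj : Function.Injective (fun i : Fin k => (hcomp.1 i).choose) := by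
      intro i i' h
      have h1 := (hcomp.1 i).choose_spec.2
      have h2 := (hcomp.1 i').choose_spec.2
      rw [← h1, ← h2]
      exact congrArg c h
    calc k = Fintype.card (Fin k) := (Fintype.card_fin k).symm
      _ ≤ _ := Fintype.card_le_of_injective _ hinj
  · exact hmain
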